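/- For all integers s, t ≥ k ≥ 3, the k-uniform hypergraph Ramsey number satisfies r_k(s, t) ≤ 2^{C(r_{k-1}(s-1, t-1), k-1)} + k - 2. -/

import Mathlib

/-- A red/blue colouring `c` of the `k`-subsets of `Fin N` contains a monochromatic
clique of order `m` in colour `col` (all `k`-subsets of some `m`-set get colour `col`). -/
def hasMonoCliqueH {N : ℕ} (k : ℕ) (c : Finset (Fin N) → Bool) (col : Bool) (m : ℕ) : Prop :=
  ∃ S : Finset (Fin N), S.card = m ∧ ∀ e ⊆ S, e.card = k → c e = col

/-- The `k`-uniform hypergraph Ramsey number `r_k(s,t)`. -/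
noncomputable def ramseyH (k s t : ℕ) : ℕ :=
  sInf {N | ∀ c : Finset (Fin N) → Bool,
    hasMonoCliqueH k c true s ∨ hasMonoCliqueH k c false t}

/-! ### Auxiliary development : the Erdős–Rado stepping-up argument -/

def ramseyProp (k s t N : ℕ) : Prop :=
  ∀ c : Finset (Fin N) → Bool,
    hasMonoCliqueH k c true s ∨ hasMonoCliqueH k c false t

/-- The key homogeneity invariant: for any `k`-subset `e` of a prefix of the chosen
list `L`, the colour of `insert w e` does not depend on `w`, for `w` ranging over the
reservoir `T` together with the later chosen vertices. (Used with uniformity `k+1`.) -/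
def InvH {N : ℕ} (k : ℕ) (c : Finset (Fin N) → Bool) (L : List (Fin N))
    (T : Finset (Fin N)) : Prop :=
  ∀ (i : ℕ) (e : Finset (Fin N)), e.card = k → e ⊆ (L.take i).toFinset →
    ∀ w ∈ T ∪ (L.drop i).toFinset, ∀ w' ∈ T ∪ (L.drop i).toFinset,
      c (insert w e) = c (insert w' e)

/-- Exponent bookkeeping: `expE k d j = Σ_{i=0}^{d-1} C(j+i, k-1)`. -/
def expE (k : ℕ) : ℕ → ℕ → ℕ
  | 0, _ => 0
  | d + 1, j => Nat.choose j (k - 1) + expE k d (j + 1)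

lemma expE_eq (k : ℕ) (hk : 1 ≤ k) :
    ∀ d j, expE k d j + Nat.choose j k = Nat.choose (j + d) k := by
  intro d
  induction d with
  | zero => intro j; simp [expE]
  | succ d ih =>
    intro j
    have h1 := ih (j + 1)
    have pascal : Nat.choose (j + 1) k = Nat.choose j (k - 1) + Nat.choose j k := by
      obtain ⟨k', rfl⟩ : ∃ k', k = k' + 1 := ⟨k - 1, by omega⟩
      simp [Nat.choose_succ_succ']
    have h2 : j + (d + 1) = (j + 1) + d := by omega
    rw [h2]
    simp only [expE]
    omega

lemma get_mem_take_toFinset {α : Type*} [DecidableEq α] (l : List α) (i : ℕ)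
    (b : Fin l.length) (h : (b : ℕ) < i) : l.get b ∈ (l.take i).toFinset := by
  apply List.mem_toFinset.2
  have hb : (b : ℕ) < (l.take i).length := by
    simp [List.length_take]; omega
  have : (l.take i).get ⟨b, hb⟩ = l.get b := by
    simp [List.getElem_take]
  rw [← this]
  exact List.get_mem _ _

lemma get_mem_drop_toFinset {α : Type*} [DecidableEq α] (l : List α) (i : ℕ)
    (b : Fin l.length) (h : i ≤ (b : ℕ)) : l.get b ∈ (l.drop i).toFinset := by
  apply List.mem_toFinset.2
  have hb : (b : ℕ) - i < (l.drop i).length := by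
    simp [List.length_drop]; omega
  have : (l.drop i).get ⟨(b : ℕ) - i, hb⟩ = l.get b := by
    simp only [List.get_eq_getElem, List.getElem_drop]
    congr 1
    omega
  rw [← this]
  exact List.get_mem _ _

/-- Counting `k+1`-subsets of `insert v V` containing `v`. -/
lemma card_subsets_containing {α : Type*} [DecidableEq α] (V : Finset α) (v : α)
    (hv : v ∉ V) (k : ℕ) :
    (((insert v V).powersetCard (k + 1)).filter (fun e => v ∈ e)).card
      = Nat.choose V.card k := by
  have himg : ((insert v V).powersetCard (k + 1)).filter (fun e => v ∈ e)
      = (V.powersetCard k).image (insert v) := by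
    ext e
    simp only [Finset.mem_filter, Finset.mem_powersetCard, Finset.mem_image]
    constructor
    · rintro ⟨⟨hsub, hcard⟩, hve⟩
      refine ⟨e.erase v, ⟨?_, ?_⟩, Finset.insert_erase hve⟩
      · intro x hx
        have hxe := Finset.mem_of_mem_erase hx
        have hxv := Finset.ne_of_mem_erase hx
        rcases Finset.mem_insert.1 (hsub hxe) with h | h
        · exact absurd h hxv
        · exact h
      · rw [Finset.card_erase_of_mem hve, hcard]; rfl
    · rintro ⟨a, ⟨hsub, hcard⟩, rfl⟩
      have hva : v ∉ a := fun h => hv (hsub h)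
      exact ⟨⟨Finset.insert_subset_insert v hsub,
        by rw [Finset.card_insert_of_notMem hva, hcard]⟩, Finset.mem_insert_self v a⟩
  rw [himg, Finset.card_image_of_injOn, Finset.card_powersetCard]
  intro a ha b hb hab
  have hva : v ∉ a := fun h => hv ((Finset.mem_powersetCard.1 ha).1 h)
  have hvb : v ∉ b := fun h => hv ((Finset.mem_powersetCard.1 hb).1 h)
  rw [← Finset.erase_insert hva, ← Finset.erase_insert hvb, hab]

lemma buildH {N : ℕ} (k : ℕ) (hk : 1 ≤ k) (c : Finset (Fin N) → Bool) :
    ∀ (d : ℕ) (L : List (Fin N)) (T : Finset (Fin N)),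
      L.Nodup → Disjoint L.toFinset T → k - 1 ≤ L.length → InvH k c L T →
      2 ^ expE k d L.length ≤ T.card →
      ∃ (L' : List (Fin N)) (T' : Finset (Fin N)),
        L'.Nodup ∧ Disjoint L'.toFinset T' ∧ InvH k c L' T' ∧
        L'.length = L.length + d ∧ (∃ p, L' = L ++ p) ∧ T'.Nonempty := by
  intro d
  induction d with
  | zero =>
    intro L T hnd hdis hlen hinv hcard
    refine ⟨L, T, hnd, hdis, hinv, by simp, ⟨[], by simp⟩, Finset.card_pos.mp ?_⟩
    simpa [expE] using hcard
  | succ d ih =>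
    intro L T hnd hdis hlen hinv hcard
    have hccpos : 1 ≤ Nat.choose L.length (k - 1) := Nat.choose_pos (by omega)
    have h2cc : 2 ≤ 2 ^ Nat.choose L.length (k - 1) :=
      Nat.one_lt_two_pow (by omega)
    have hee1 : 1 ≤ 2 ^ expE k d (L.length + 1) := Nat.one_le_two_pow
    have hpowadd : 2 ^ Nat.choose L.length (k - 1) * 2 ^ expE k d (L.length + 1)
        = 2 ^ (Nat.choose L.length (k - 1) + expE k d (L.length + 1)) := (pow_add 2 _ _).symm
    have hcard' : 2 ^ (Nat.choose L.length (k - 1) + expE k d (L.length + 1)) ≤ T.card := by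
      simpa [expE] using hcard
    have hTpos : 2 ≤ T.card := le_trans (by nlinarith) hcard'
    obtain ⟨v, hv⟩ : ∃ v, v ∈ T := Finset.card_pos.mp (by omega)
    set V := L.toFinset with hV
    have hvV : v ∉ V := Finset.disjoint_right.mp hdis hv
    have hvL : v ∉ L := fun h => hvV (List.mem_toFinset.2 h)
    obtain ⟨k', hk'⟩ : ∃ k', k = k' + 1 := ⟨k - 1, by omega⟩
    set B := ((insert v V).powersetCard k).filter (fun e => v ∈ e) with hB
    have hBcard : B.card = Nat.choose L.length (k - 1) := by
      have hVc : V.card = L.length := List.toFinset_card_of_nodup hnd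
      have h0 := card_subsets_containing V v hvV k'
      rw [← hk'] at h0
      rw [hB, h0, hVc]
      congr 1
      omega
    set f : Fin N → Finset (Finset (Fin N)) := fun w => B.filter (fun e => c (insert w e) = true)
      with hf
    have hmaps : ∀ w ∈ T.erase v, f w ∈ B.powerset :=
      fun w _ => Finset.mem_powerset.2 (Finset.filter_subset _ _)
    have hcount : B.powerset.card * (2 ^ expE k d (L.length + 1) - 1) < (T.erase v).card := by
      rw [Finset.card_powerset, hBcard, Finset.card_erase_of_mem hv]
      have h1 : 2 ^ Nat.choose L.length (k - 1) * (2 ^ expE k d (L.length + 1) - 1)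
          + 2 ^ Nat.choose L.length (k - 1)
          = 2 ^ Nat.choose L.length (k - 1) * 2 ^ expE k d (L.length + 1) := by
        rw [← Nat.mul_succ]
        congr 1
        omega
      omega
    obtain ⟨y, _hy, hyc⟩ :=
      Finset.exists_lt_card_fiber_of_mul_lt_card_of_maps_to hmaps hcount
    set F := (T.erase v).filter (fun w => f w = y) with hF
    have hFcard : 2 ^ expE k d (L.length + 1) ≤ F.card := by
      have := hyc
      omega
    have hFT : F ⊆ T.erase v := Finset.filter_subset _ _
    have hFT' : F ⊆ T := hFT.trans (Finset.erase_subset _ _)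
    have hnd' : (L ++ [v]).Nodup := by
      simp [List.nodup_append, hnd, hvL]
      intro a ha hav; exact hvL (hav ▸ ha)
    have hdis' : Disjoint (L ++ [v]).toFinset F := by
      rw [List.toFinset_append]
      apply Finset.disjoint_union_left.2
      constructor
      · exact Finset.disjoint_of_subset_right hFT' hdis
      · simp only [List.toFinset_cons, List.toFinset_nil, LawfulSingleton.insert_empty_eq]
        rw [Finset.disjoint_left]
        intro x hx
        rw [Finset.mem_singleton] at hx
        subst hx
        intro hxF
        exact absurd (hFT hxF) (Finset.notMem_erase _ _)
    have hinv' : InvH k c (L ++ [v]) F := by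
      intro i e hecard hesub w hw w' hw'
      by_cases hi : i ≤ L.length
      · rw [List.take_append_of_le_length hi] at hesub
        rw [List.drop_append_of_le_length hi] at hw hw'
        have hsub2 : F ∪ (L.drop i ++ [v]).toFinset ⊆ T ∪ (L.drop i).toFinset := by
          intro x hx
          rw [Finset.mem_union, List.toFinset_append] at hx
          rcases hx with hx | hx
          · exact Finset.mem_union_left _ (hFT' hx)
          · rw [Finset.mem_union] at hx
            rcases hx with hx | hx
            · exact Finset.mem_union_right _ hx
            · simp only [List.toFinset_cons, List.toFinset_nil, LawfulSingleton.insert_empty_eq,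
                Finset.mem_singleton] at hx
              subst hx
              exact Finset.mem_union_left _ hv
        exact hinv i e hecard hesub w (hsub2 hw) w' (hsub2 hw')
      · have htake : (L ++ [v]).take i = L ++ [v] :=
          List.take_of_length_le (by simp; omega)
        have hdrop : (L ++ [v]).drop i = [] :=
          List.drop_eq_nil_of_le (by simp; omega)
        rw [htake] at hesub
        rw [hdrop] at hw hw'
        simp only [List.toFinset_nil, Finset.union_empty] at hw hw'
        have hesub' : e ⊆ insert v V := by
          intro x hx
          have := hesub hx
          rw [List.toFinset_append] at this
          rcases Finset.mem_union.1 this with h | h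
          · exact Finset.mem_insert_of_mem h
          · simp only [List.toFinset_cons, List.toFinset_nil, LawfulSingleton.insert_empty_eq,
              Finset.mem_singleton] at h
            subst h
            exact Finset.mem_insert_self _ _
        by_cases hve : v ∈ e
        · have heB : e ∈ B :=
            Finset.mem_filter.2 ⟨Finset.mem_powersetCard.2 ⟨hesub', hecard⟩, hve⟩
          have hfw : f w = y := (Finset.mem_filter.1 hw).2
          have hfw' : f w' = y := (Finset.mem_filter.1 hw').2
          have h1 : (c (insert w e) = true) ↔ e ∈ y := by
            rw [← hfw, hf]
            simp only [Finset.mem_filter]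
            tauto
          have h2 : (c (insert w' e) = true) ↔ e ∈ y := by
            rw [← hfw', hf]
            simp only [Finset.mem_filter]
            tauto
          exact Bool.eq_iff_iff.mpr (h1.trans h2.symm)
        · have hesub'' : e ⊆ (L.take L.length).toFinset := by
            rw [List.take_length]
            intro x hx
            rcases Finset.mem_insert.1 (hesub' hx) with h | h
            · exact absurd (h ▸ hx) hve
            · exact h
          have hwT : w ∈ T ∪ (L.drop L.length).toFinset :=
            Finset.mem_union_left _ (hFT' hw)
          have hwT' : w' ∈ T ∪ (L.drop L.length).toFinset :=
            Finset.mem_union_left _ (hFT' hw')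
          exact hinv L.length e hecard hesub'' w hwT w' hwT'
    have hlen2 : k - 1 ≤ (L ++ [v]).length := by simp; omega
    have hcard2 : 2 ^ expE k d (L ++ [v]).length ≤ F.card := by
      simpa using hFcard
    obtain ⟨L', T', h1, h2, h3, h4, ⟨p, hp⟩, h6⟩ := ih (L ++ [v]) F hnd' hdis' hlen2 hinv' hcard2
    refine ⟨L', T', h1, h2, h3, by simp at h4 ⊢; omega, ⟨[v] ++ p, by simp [hp]⟩, h6⟩

lemma liftClique {N r : ℕ} (k : ℕ) (c : Finset (Fin N) → Bool)
    (L : List (Fin N)) (T : Finset (Fin N)) (hnd : L.Nodup)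
    (hdis : Disjoint L.toFinset T) (hinv : InvH k c L T) (hlen : L.length = r)
    (u₀ : Fin N) (hu : u₀ ∈ T) (col : Bool) (q : ℕ)
    (h : hasMonoCliqueH k
      (fun d : Finset (Fin r) =>
        c (insert u₀ (d.image (fun i => L.get (Fin.cast hlen.symm i))))) col q) :
    hasMonoCliqueH (k + 1) c col (q + 1) := by
  obtain ⟨S', hS'card, hS'mono⟩ := h
  set fL : Fin r → Fin N := fun i => L.get (Fin.cast hlen.symm i) with hfL
  have hfinj : Function.Injective fL := by
    intro a b hab
    have h1 : Function.Injective L.get := List.nodup_iff_injective_get.mp hnd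
    have h2 := h1 hab
    simpa [Fin.ext_iff] using h2
  have hmemL : ∀ i, fL i ∈ L.toFinset := fun i => List.mem_toFinset.2 (L.get_mem _)
  have himgL : ∀ (D : Finset (Fin r)), D.image fL ⊆ L.toFinset := by
    intro D x hx
    obtain ⟨i, _, rfl⟩ := Finset.mem_image.1 hx
    exact hmemL i
  have huL : u₀ ∉ S'.image fL := by
    intro hcon
    exact Finset.disjoint_left.mp hdis (himgL S' hcon) hu
  refine ⟨insert u₀ (S'.image fL), ?_, ?_⟩
  · rw [Finset.card_insert_of_notMem huL, Finset.card_image_of_injective _ hfinj, hS'card]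
  · intro e hesub hecard
    by_cases hue : u₀ ∈ e
    · have h1 : e.erase u₀ ⊆ S'.image fL := Finset.subset_insert_iff.mp hesub
      obtain ⟨D, hDS, hDim⟩ := Finset.subset_image_iff.1 h1
      have hDcard : D.card = k := by
        have := Finset.card_image_of_injective D hfinj
        rw [hDim, Finset.card_erase_of_mem hue, hecard] at this
        omega
      have hmono := hS'mono D hDS hDcard
      calc c e = c (insert u₀ (e.erase u₀)) := by rw [Finset.insert_erase hue]
        _ = col := by rw [← hDim]; exact hmono
    · have h1 : e ⊆ S'.image fL := by
        intro x hx
        rcases Finset.mem_insert.1 (hesub hx) with h | h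
        · exact absurd (h ▸ hx) hue
        · exact h
      obtain ⟨D, hDS, hDim⟩ := Finset.subset_image_iff.1 h1
      have hDcard : D.card = k + 1 := by
        have := Finset.card_image_of_injective D hfinj
        rw [hDim, hecard] at this
        omega
      have hDne : D.Nonempty := Finset.card_pos.mp (by omega)
      set a := D.max' hDne with ha
      have haD : a ∈ D := D.max'_mem hDne
      set x := fL a with hx
      have hxe : x ∈ e := hDim ▸ Finset.mem_image_of_mem _ haD
      have herase : e.erase x = (D.erase a).image fL := by
        rw [← hDim, ← Finset.image_erase hfinj]
      have hd'S : D.erase a ⊆ S' := (Finset.erase_subset _ _).trans hDS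
      have hd'card : (D.erase a).card = k := by
        rw [Finset.card_erase_of_mem haD, hDcard]
        omega
      have hmono := hS'mono (D.erase a) hd'S hd'card
      have hasub : e.erase x ⊆ (L.take (a : ℕ)).toFinset := by
        rw [herase]
        intro z hz
        obtain ⟨b, hb, rfl⟩ := Finset.mem_image.1 hz
        have hbD := Finset.mem_of_mem_erase hb
        have hba : b ≠ a := Finset.ne_of_mem_erase hb
        have hble : b ≤ a := D.le_max' b hbD
        have hblt : (b : ℕ) < (a : ℕ) :=
          lt_of_le_of_ne hble (fun hc => hba (Fin.ext hc))
        exact get_mem_take_toFinset L (a : ℕ) (Fin.cast hlen.symm b) (by simpa using hblt)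
      have hxdrop : x ∈ (L.drop (a : ℕ)).toFinset :=
        get_mem_drop_toFinset L (a : ℕ) (Fin.cast hlen.symm a) (by simp)
      have hec' : (e.erase x).card = k := by
        rw [Finset.card_erase_of_mem hxe, hecard]
        omega
      have heq := hinv (a : ℕ) (e.erase x) hec' hasub x
        (Finset.mem_union_right _ hxdrop) u₀ (Finset.mem_union_left _ hu)
      calc c e = c (insert x (e.erase x)) := by rw [Finset.insert_erase hxe]
        _ = c (insert u₀ (e.erase x)) := heq
        _ = col := by rw [herase]; exact hmono

lemma stepH (k s t r : ℕ) (hk : 1 ≤ k) (hkr : k - 1 ≤ r)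
    (hr : ramseyProp k s t r) :
    ramseyProp (k + 1) (s + 1) (t + 1) (2 ^ Nat.choose r k + (k - 1)) := by
  set N := 2 ^ Nat.choose r k + (k - 1) with hN
  intro c
  have hpow1 : 1 ≤ 2 ^ Nat.choose r k := Nat.one_le_two_pow
  obtain ⟨A, _hA, hAcard⟩ := Finset.exists_subset_card_eq
    (show k - 1 ≤ (Finset.univ : Finset (Fin N)).card by
      rw [Finset.card_univ, Fintype.card_fin]; omega)
  set L₀ := A.toList with hL₀
  have h₀nd : L₀.Nodup := A.nodup_toList
  have h₀fin : L₀.toFinset = A := Finset.toList_toFinset A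
  have h₀len : L₀.length = k - 1 := by rw [hL₀, Finset.length_toList, hAcard]
  have h₀inv : InvH k c L₀ Aᶜ := by
    intro i e hec hesub w _ w' _
    exfalso
    have h1 : e.card ≤ (L₀.take i).toFinset.card := Finset.card_le_card hesub
    have h2 : (L₀.take i).toFinset.card ≤ (L₀.take i).length := (L₀.take i).toFinset_card_le
    have h3 : (L₀.take i).length ≤ L₀.length := by
      rw [List.length_take]; omega
    omega
  have h₀card : 2 ^ expE k (r - (k - 1)) L₀.length ≤ Aᶜ.card := by
    have h1 : Aᶜ.card = N - (k - 1) := by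
      rw [Finset.card_compl, hAcard, Fintype.card_fin]
    have h2 : expE k (r - (k - 1)) (k - 1) = Nat.choose r k := by
      have h3 := expE_eq k hk (r - (k - 1)) (k - 1)
      have h4 : Nat.choose (k - 1) k = 0 := Nat.choose_eq_zero_of_lt (by omega)
      have h5 : (k - 1) + (r - (k - 1)) = r := by omega
      rw [h5, h4] at h3
      omega
    rw [h₀len, h1, h2]
    omega
  obtain ⟨L', T', hnd', hdis', hinv', hlen', _, hTne⟩ :=
    buildH k hk c (r - (k - 1)) L₀ Aᶜ h₀nd
      (by rw [h₀fin]; exact disjoint_compl_right) (by omega) h₀inv h₀card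
  have hL'len : L'.length = r := by rw [hlen', h₀len]; omega
  obtain ⟨u₀, hu₀⟩ := hTne
  rcases hr (fun d : Finset (Fin r) =>
      c (insert u₀ (d.image (fun i => L'.get (Fin.cast hL'len.symm i))))) with h | h
  · exact Or.inl (liftClique k c L' T' hnd' hdis' hinv' hL'len u₀ hu₀ true s h)
  · exact Or.inr (liftClique k c L' T' hnd' hdis' hinv' hL'len u₀ hu₀ false t h)

lemma baseH (s t : ℕ) (hs : 1 ≤ s) (ht : 1 ≤ t) :
    ramseyProp 1 s t (s + t - 1) := by
  intro c
  set A := Finset.univ.filter (fun x : Fin (s + t - 1) => c {x} = true) with hA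
  set B := Finset.univ.filter (fun x : Fin (s + t - 1) => ¬(c {x} = true)) with hB
  have hAB : A.card + B.card = s + t - 1 := by
    rw [hA, hB, Finset.card_filter_add_card_filter_not, Finset.card_univ,
      Fintype.card_fin]
  by_cases hcase : s ≤ A.card
  · left
    obtain ⟨S, hSA, hScard⟩ := Finset.exists_subset_card_eq hcase
    refine ⟨S, hScard, fun e he hec => ?_⟩
    obtain ⟨x, rfl⟩ := Finset.card_eq_one.1 hec
    have hx : x ∈ A := hSA (he (Finset.mem_singleton_self x))
    exact (Finset.mem_filter.1 hx).2
  · right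
    have hcase' : t ≤ B.card := by omega
    obtain ⟨S, hSB, hScard⟩ := Finset.exists_subset_card_eq hcase'
    refine ⟨S, hScard, fun e he hec => ?_⟩
    obtain ⟨x, rfl⟩ := Finset.card_eq_one.1 hec
    have hx : x ∈ B := hSB (he (Finset.mem_singleton_self x))
    have := (Finset.mem_filter.1 hx).2
    simpa using this

lemma lowerH (k a b M : ℕ) (h : ramseyProp k a b M) (hk : 1 ≤ k) (hb : k ≤ b) :
    a ≤ M := by
  rcases h (fun _ => true) with ⟨S, hS, _⟩ | ⟨S, hS, hmono⟩
  · calc a = S.card := hS.symm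
      _ ≤ Fintype.card (Fin M) := Finset.card_le_univ S
      _ = M := Fintype.card_fin M
  · exfalso
    obtain ⟨e, he, hec⟩ := Finset.exists_subset_card_eq (s := S) (n := k) (by omega)
    have := hmono e he hec
    simp at this

lemma existsH : ∀ k, 1 ≤ k → ∀ s t, k ≤ s → k ≤ t → ∃ N, ramseyProp k s t N := by
  intro k
  induction k with
  | zero => omega
  | succ k ih =>
    intro _ s t hs ht
    rcases Nat.eq_zero_or_pos k with rfl | hk
    · exact ⟨s + t - 1, baseH s t (by omega) (by omega)⟩
    · obtain ⟨N₀, hN₀⟩ := ih hk (s - 1) (t - 1) (by omega) (by omega)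
      have hne : {M | ramseyProp k (s - 1) (t - 1) M}.Nonempty := ⟨N₀, hN₀⟩
      have hm : ramseyProp k (s - 1) (t - 1) (sInf {M | ramseyProp k (s - 1) (t - 1) M}) :=
        Nat.sInf_mem hne
      have hml : s - 1 ≤ sInf {M | ramseyProp k (s - 1) (t - 1) M} :=
        lowerH k (s - 1) (t - 1) _ hm hk (by omega)
      have hstep := stepH k (s - 1) (t - 1) _ hk (by omega) hm
      rw [show s - 1 + 1 = s by omega, show t - 1 + 1 = t by omega] at hstep
      exact ⟨_, hstep⟩

theorem stmt7 (k s t : ℕ) (hk : 3 ≤ k) (hs : k ≤ s) (ht : k ≤ t) :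
    ramseyH k s t ≤ 2 ^ Nat.choose (ramseyH (k - 1) (s - 1) (t - 1)) (k - 1) + k - 2 := by
  have hk1 : 1 ≤ k - 1 := by omega
  obtain ⟨N₀, hN₀⟩ := existsH (k - 1) hk1 (s - 1) (t - 1) (by omega) (by omega)
  have hne : {M | ramseyProp (k - 1) (s - 1) (t - 1) M}.Nonempty := ⟨N₀, hN₀⟩
  have hm : ramseyProp (k - 1) (s - 1) (t - 1)
      (sInf {M | ramseyProp (k - 1) (s - 1) (t - 1) M}) := Nat.sInf_mem hne
  have hmeq : ramseyH (k - 1) (s - 1) (t - 1)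
      = sInf {M | ramseyProp (k - 1) (s - 1) (t - 1) M} := rfl
  rw [hmeq]
  set m := sInf {M | ramseyProp (k - 1) (s - 1) (t - 1) M} with hmdef
  have hml : s - 1 ≤ m := lowerH (k - 1) (s - 1) (t - 1) m hm hk1 (by omega)
  have hstep := stepH (k - 1) (s - 1) (t - 1) m hk1 (by omega) hm
  rw [show k - 1 + 1 = k by omega, show s - 1 + 1 = s by omega,
    show t - 1 + 1 = t by omega] at hstep
  have hle : ramseyH k s t ≤ 2 ^ Nat.choose m (k - 1) + (k - 1 - 1) :=
    Nat.sInf_le hstep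
  omega
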